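/- Let n be a nonnegative integer and let a, b be complex numbers with (−b−2n)_n ≠ 0, (1−b−n)_n ≠ 0, (1+a)_{2n} ≠ 0, (1+a−b)_n ≠ 0, and (1+a+n)_n ≠ 0. Then the sum of the first n+1 terms of the series _3F_2(−b/2−n, (1−b)/2−n, −a−2n ; −b−2n, 1−b−n ; 4), namely Σ_{k=0}^{n} [(−b/2−n)_k ((1−b)/2−n)_k (−a−2n)_k / (k! (−b−2n)_k (1−b−n)_k)] 4^k, equals [(−1)^n (1+a)_{2n} / (n! (1+a)_n)] · _4F_3(−n, (1+a−b)/2, (2+a−b)/2, 1 ; 1+a−b, 1−b−n, 1+a+n ; 4). -/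

import Mathlib

open Finset

/-- The rising factorial (Pochhammer symbol) `(a)_k = a(a+1)⋯(a+k-1)`. -/
noncomputable def poch (a : ℂ) (k : ℕ) : ℂ := ∏ i ∈ Finset.range k, (a + i)

lemma poch_zero (a : ℂ) : poch a 0 = 1 := by simp [poch]

lemma poch_succ (a : ℂ) (k : ℕ) : poch a (k+1) = poch a k * (a + k) := by
  simp [poch, Finset.prod_range_succ]

lemma poch_add (a : ℂ) (i j : ℕ) : poch a (i + j) = poch a i * poch (a + i) j := by
  unfold poch
  rw [Finset.prod_range_add]
  congr 1
  refine Finset.prod_congr rfl fun k _ => ?_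
  push_cast; ring

lemma poch_ne_zero_of_le {a : ℂ} {n : ℕ} (h : poch a n ≠ 0) {k : ℕ} (hk : k ≤ n) :
    poch a k ≠ 0 := by
  intro h0
  apply h
  have : n = k + (n - k) := by omega
  rw [this, poch_add, h0, zero_mul]

lemma poch_right_ne_zero_of_le {a : ℂ} {n : ℕ} (h : poch a n ≠ 0) {k : ℕ} (hk : k ≤ n) :
    poch (a + k) (n - k) ≠ 0 := by
  intro h0
  apply h
  have : n = k + (n - k) := by omega
  rw [this, poch_add, h0, mul_zero]

lemma poch_reflect (y : ℂ) (m : ℕ) : poch y m = (-1) ^ m * poch (1 - m - y) m := by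
  unfold poch
  rw [← Finset.prod_range_reflect fun i => (y + (i:ℂ))]
  rw [show ((-1:ℂ))^m = ∏ _i ∈ Finset.range m, (-1:ℂ) by simp, ← Finset.prod_mul_distrib]
  refine Finset.prod_congr rfl fun k hk => ?_
  have hk' : k < m := Finset.mem_range.mp hk
  have : ((m - 1 - k : ℕ) : ℂ) = (m : ℂ) - 1 - k := by
    have : (m - 1 - k : ℕ) = m - 1 - k := rfl
    push_cast [Nat.cast_sub (by omega : k ≤ m - 1), Nat.cast_sub (by omega : 1 ≤ m)]
    ring
  rw [this]; ring

lemma poch_nat (r s : ℕ) : (r.factorial : ℂ) * poch ((r:ℂ) + 1) s = ((r+s).factorial : ℂ) := by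
  induction s with
  | zero => simp [poch_zero]
  | succ s ih =>
      rw [poch_succ, ← mul_assoc, ih]
      have : r + (s+1) = (r + s) + 1 := by omega
      rw [this, Nat.factorial_succ]
      push_cast; ring

lemma poch_one (k : ℕ) : poch 1 k = k.factorial := by
  have := poch_nat 0 k
  simpa using this

lemma poch_dupl (c : ℂ) (k : ℕ) :
    poch (c/2) k * poch ((c+1)/2) k * 4 ^ k = poch c (2*k) := by
  induction k with
  | zero => simp [poch_zero]
  | succ k ih =>
      have h2 : 2 * (k+1) = 2*k + 2 := by ring
      have hr : poch c (2*(k+1)) = poch c (2*k) * ((c + 2*k) * (c + 2*k + 1)) := by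
        rw [h2, poch_add]
        have : poch (c + ((2*k:ℕ):ℂ)) 2 = (c + 2*k) * (c + 2*k + 1) := by
          unfold poch
          rw [Finset.prod_range_succ, Finset.prod_range_succ, Finset.prod_range_zero]
          push_cast; ring
        rw [this]
      rw [hr, poch_succ, poch_succ, pow_succ, ← ih]
      push_cast; ring

lemma poch_vandermonde (u v : ℂ) (m : ℕ) :
    poch (u + v) m = ∑ k ∈ range (m+1), (m.choose k : ℂ) * poch u k * poch v (m-k) := by
  induction m with
  | zero => simp [poch_zero]
  | succ m ih =>
      rw [poch_succ, ih, Finset.sum_mul]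
      have split : ∀ k ∈ range (m+1),
          (m.choose k : ℂ) * poch u k * poch v (m-k) * (u + v + m)
          = (m.choose k : ℂ) * poch u (k+1) * poch v (m-k)
            + (m.choose k : ℂ) * poch u k * poch v ((m-k)+1) := by
        intro k hk
        have hk' : k ≤ m := by simpa using Nat.lt_succ_iff.mp (Finset.mem_range.mp hk)
        rw [poch_succ, poch_succ]
        have hc : ((m-k:ℕ):ℂ) = (m:ℂ) - k := by
          push_cast [Nat.cast_sub hk']; ring
        rw [hc]; ring
      rw [Finset.sum_congr rfl split, Finset.sum_add_distrib]
      -- RHS: peel first term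
      rw [Finset.sum_range_succ' (fun k => ((m+1).choose k : ℂ) * poch u k * poch v (m+1-k))]
      have hrw : ∀ i ∈ range (m+1),
          (((m+1).choose (i+1) : ℕ) : ℂ) * poch u (i+1) * poch v (m+1-(i+1))
          = (m.choose i : ℂ) * poch u (i+1) * poch v (m-i)
            + (m.choose (i+1) : ℂ) * poch u (i+1) * poch v (m-i) := by
        intro i _
        rw [Nat.choose_succ_succ]
        have : m+1-(i+1) = m-i := by omega
        rw [this]; push_cast; ring
      have hB : (∑ k ∈ range (m+1), (m.choose k : ℂ) * poch u k * poch v ((m-k)+1))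
          = (∑ i ∈ range (m+1), (m.choose (i+1) : ℂ) * poch u (i+1) * poch v (m-i))
            + ((m+1).choose 0 : ℂ) * poch u 0 * poch v (m+1-0) := by
        rw [Finset.sum_range_succ' (fun k => (m.choose k : ℂ) * poch u k * poch v ((m-k)+1))]
        rw [Finset.sum_range_succ (fun i => (m.choose (i+1) : ℂ) * poch u (i+1) * poch v (m-i))]
        have h0 : (m.choose (m+1) : ℂ) = 0 := by
          rw [Nat.choose_eq_zero_of_lt (by omega)]; simp
        rw [h0]
        simp only [zero_mul, add_zero, Nat.choose_zero_right, Nat.sub_zero]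
        congr 1
        · refine Finset.sum_congr rfl fun i hi => ?_
          have : m - (i+1) + 1 = m - i := by
            have := Finset.mem_range.mp hi; omega
          rw [this]
      rw [Finset.sum_congr rfl hrw, Finset.sum_add_distrib, hB]
      ring

lemma claimA (n : ℕ) (x z : ℂ) :
    (∑ k ∈ range (n+1), poch x k * poch (z + 2*((n:ℂ) - k) + 1) k * poch z (n-k) / (k.factorial : ℂ))
    = ∑ k ∈ range (n+1), poch x k * poch (x + z + 2*(k:ℂ)) (n-k) * poch z k / (k.factorial : ℂ) := by
  have hT : ∀ s : ℕ, (s.factorial : ℂ) ≠ 0 := fun s => Nat.cast_ne_zero.mpr s.factorial_ne_zero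
  -- the common double sum
  set T : ℂ := ∑ k ∈ range (n+1), ∑ j ∈ range (n+1-k),
      (((n-k).choose j : ℕ) : ℂ) * poch x (k+j) * poch z (n-j) / (k.factorial : ℂ) with hTdef
  have hcoeff : ∀ m k : ℕ, k ≤ m → m ≤ n →
      (m.choose k : ℂ) * poch (((n-m : ℕ) : ℂ) + 1) (m-k) * (k.factorial : ℂ)
      = ((n-k).choose (m-k) : ℂ) * (m.factorial : ℂ) := by
    intro m k hk hm
    have hp : ((n-m).factorial : ℂ) * poch (((n-m : ℕ) : ℂ) + 1) (m-k) = ((n-k).factorial : ℂ) := by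
      have := poch_nat (n-m) (m-k)
      rw [this, show (n-m) + (m-k) = n-k by omega]
    have hnat : m.choose k * ((n-k).factorial * k.factorial)
        = (n-k).choose (m-k) * ((n-m).factorial * m.factorial) := by
      apply Nat.eq_of_mul_eq_mul_right (Nat.factorial_pos (m-k))
      have h1 : m.choose k * k.factorial * (m-k).factorial = m.factorial :=
        Nat.choose_mul_factorial_mul_factorial hk
      have h2 : (n-k).choose (m-k) * (m-k).factorial * ((n-k)-(m-k)).factorial = (n-k).factorial :=
        Nat.choose_mul_factorial_mul_factorial (by omega)
      rw [show (n-k)-(m-k) = n-m by omega] at h2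
      calc m.choose k * ((n-k).factorial * k.factorial) * (m-k).factorial
          = (m.choose k * k.factorial * (m-k).factorial) * (n-k).factorial := by ring
        _ = m.factorial * (n-k).factorial := by rw [h1]
        _ = ((n-k).choose (m-k) * (m-k).factorial * (n-m).factorial) * m.factorial := by rw [h2]; ring
        _ = (n-k).choose (m-k) * ((n-m).factorial * m.factorial) * (m-k).factorial := by ring
    have hc : (m.choose k : ℂ) * ((n-k).factorial * k.factorial)
        = ((n-k).choose (m-k) : ℂ) * ((n-m).factorial * m.factorial) := by
      exact_mod_cast congrArg (Nat.cast : ℕ → ℂ) hnat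
    have hfm : ((n-m).factorial : ℂ) ≠ 0 := hT _
    rw [← hp] at hc
    apply mul_left_cancel₀ hfm
    linear_combination hc
  have hRHS : (∑ k ∈ range (n+1), poch x k * poch (x + z + 2*(k:ℂ)) (n-k) * poch z k / (k.factorial : ℂ)) = T := by
    refine Finset.sum_congr rfl fun k hk => ?_
    have hk' : k ≤ n := by have := Finset.mem_range.mp hk; omega
    have h1 : x + z + 2*(k:ℂ) = (x + (k:ℂ)) + (z + (k:ℂ)) := by ring
    rw [h1, poch_vandermonde, show n - k + 1 = n + 1 - k by omega]
    rw [Finset.mul_sum, Finset.sum_mul, Finset.sum_div]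
    refine Finset.sum_congr rfl fun j hj => ?_
    have hj' : j ≤ n - k := by have := Finset.mem_range.mp hj; omega
    have e1 : poch x (k+j) = poch x k * poch (x+(k:ℂ)) j := poch_add x k j
    have e2 : poch z (n-j) = poch z k * poch (z+(k:ℂ)) (n-k-j) := by
      rw [show n - j = k + (n-k-j) by omega, poch_add]
    rw [e1, e2]; ring
  have hLHS : (∑ k ∈ range (n+1), poch x k * poch (z + 2*((n:ℂ) - k) + 1) k * poch z (n-k) / (k.factorial : ℂ)) = T := by
    have step1 : (∑ m ∈ range (n+1), poch x m * poch (z + 2*((n:ℂ) - m) + 1) m * poch z (n-m) / (m.factorial : ℂ))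
        = ∑ m ∈ range (n+1), ∑ k ∈ range (m+1),
            (((n-k).choose (m-k) : ℕ) : ℂ) * poch x m * poch z ((n-m)+k) / (k.factorial : ℂ) := by
      refine Finset.sum_congr rfl fun m hm => ?_
      have hm' : m ≤ n := by have := Finset.mem_range.mp hm; omega
      have harg : z + 2*((n:ℂ) - m) + 1 = (z + ((n-m : ℕ):ℂ)) + (((n-m : ℕ):ℂ) + 1) := by
        rw [Nat.cast_sub hm']; ring
      rw [harg, poch_vandermonde]
      rw [Finset.mul_sum, Finset.sum_mul, Finset.sum_div]
      refine Finset.sum_congr rfl fun k hk => ?_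
      have hk' : k ≤ m := by have := Finset.mem_range.mp hk; omega
      have e2 : poch z ((n-m)+k) = poch z (n-m) * poch (z+((n-m:ℕ):ℂ)) k := poch_add z (n-m) k
      rw [div_eq_div_iff (hT m) (hT k), e2]
      linear_combination (poch x m * (poch z (n-m) * poch (z+((n-m:ℕ):ℂ)) k)) * hcoeff m k hk' hm'
    rw [step1]
    have hswap := Finset.sum_Ico_Ico_comm 0 (n+1)
      (fun k m => (((n-k).choose (m-k) : ℕ) : ℂ) * poch x m * poch z ((n-m)+k) / (k.factorial : ℂ))
    simp only [Finset.range_eq_Ico]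
    rw [← hswap, hTdef, ← Finset.range_eq_Ico]
    refine Finset.sum_congr rfl fun k hk => ?_
    have hk' : k ≤ n := by have := Finset.mem_range.mp hk; omega
    rw [Finset.sum_Ico_eq_sum_range]
    refine Finset.sum_congr rfl fun j hj => ?_
    have hj' : k + j ≤ n := by have := Finset.mem_range.mp hj; omega
    rw [show k + j - k = j by omega, show n - (k+j) + k = n - j by omega]
  rw [hLHS, hRHS]

lemma helperA {A B C E Ck Ek Px f4 kf En : ℂ} (hC : C ≠ 0) (hE : E ≠ 0) (hkf : kf ≠ 0)
    (h1 : A * B * f4 = C * Ck) (h2 : En = E * Ek) :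
    (A * B * Px) / (kf * C * E) * f4 * En = Px * Ck * Ek / kf := by
  rw [h2]
  field_simp
  linear_combination Px * Ek * h1

lemma poch_reflect' (y w : ℂ) (m : ℕ) (h : w = 1 - (m:ℂ) - y) :
    poch y m = (-1)^m * poch w m := by
  rw [h]; exact poch_reflect y m

lemma neg_one_pow_split (n k : ℕ) (hk : k ≤ n) : ((-1:ℂ))^k * (-1:ℂ)^(n-k) = (-1:ℂ)^n := by
  rw [← pow_add]; congr 1; omega

lemma helperB {Pn D1 D2 D E F Dk Ek Fk Fn En P1k kf nf f4 : ℂ} (hD : D ≠ 0) (hE : E ≠ 0)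
    (hF : F ≠ 0) (hkf : kf ≠ 0) (hnf : nf ≠ 0) (n : ℕ)
    (h1 : D1 * D2 * f4 = D * Dk) (h2 : En = E * Ek) (h3 : Fn = F * Fk) (h4 : P1k = kf) :
    ((-1:ℂ)^n * Fn / nf) * ((Pn * D1 * D2 * P1k) / (kf * D * E * F) * f4) * En
    = (-1:ℂ)^n * (Pn * Dk * Ek * Fk / nf) := by
  rw [h2, h3, h4]
  rw [div_mul_eq_mul_div (Pn * D1 * D2 * kf) (kf * D * E * F) f4]
  rw [show Pn * D1 * D2 * kf * f4 = (D1 * D2 * f4) * (Pn * kf) by ring, h1]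
  rw [show D * Dk * (Pn * kf) = (Dk * Pn) * (kf * D) by ring,
      show kf * D * E * F = (E * F) * (kf * D) by ring,
      mul_div_mul_right _ _ (mul_ne_zero hkf hD)]
  field_simp

theorem stmt_12 (n : ℕ) (a b : ℂ)
    (hb2 : poch (-b - 2 * (n : ℂ)) n ≠ 0) (hb1 : poch (1 - b - (n : ℂ)) n ≠ 0)
    (ha2 : poch (1 + a) (2 * n) ≠ 0) (hab : poch (1 + a - b) n ≠ 0)
    (han : poch (1 + a + (n : ℂ)) n ≠ 0) :
    ∑ k ∈ range (n + 1),
      (poch (-b / 2 - (n : ℂ)) k * poch ((1 - b) / 2 - (n : ℂ)) k *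
        poch (-a - 2 * (n : ℂ)) k) /
        ((Nat.factorial k : ℂ) * poch (-b - 2 * (n : ℂ)) k * poch (1 - b - (n : ℂ)) k) *
        (4 : ℂ) ^ k
    = (-1 : ℂ) ^ n * poch (1 + a) (2 * n) / ((Nat.factorial n : ℂ) * poch (1 + a) n) *
      ∑ k ∈ range (n + 1),
        (poch (-(n : ℂ)) k * poch ((1 + a - b) / 2) k * poch ((2 + a - b) / 2) k *
          poch 1 k) /
          ((Nat.factorial k : ℂ) * poch (1 + a - b) k * poch (1 - b - (n : ℂ)) k *
            poch (1 + a + (n : ℂ)) k) * (4 : ℂ) ^ k := by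
  have hfac : ∀ s : ℕ, ((s.factorial : ℕ) : ℂ) ≠ 0 := fun s => Nat.cast_ne_zero.mpr s.factorial_ne_zero
  apply mul_right_cancel₀ hb1
  have hL : (∑ k ∈ range (n + 1),
      (poch (-b / 2 - (n : ℂ)) k * poch ((1 - b) / 2 - (n : ℂ)) k *
        poch (-a - 2 * (n : ℂ)) k) /
        ((Nat.factorial k : ℂ) * poch (-b - 2 * (n : ℂ)) k * poch (1 - b - (n : ℂ)) k) *
        (4 : ℂ) ^ k) * poch (1 - b - (n : ℂ)) n
      = (-1:ℂ)^n * ∑ k ∈ range (n+1),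
          poch (-a - 2*(n:ℂ)) k * poch (b + 2*((n:ℂ) - k) + 1) k * poch b (n-k) / (k.factorial : ℂ) := by
    rw [Finset.sum_mul, Finset.mul_sum]
    refine Finset.sum_congr rfl fun k hk => ?_
    have hk' : k ≤ n := by have := Finset.mem_range.mp hk; omega
    have hC : poch (-b - 2*(n:ℂ)) k ≠ 0 := poch_ne_zero_of_le hb2 hk'
    have hE : poch (1 - b - (n:ℂ)) k ≠ 0 := poch_ne_zero_of_le hb1 hk'
    have F1 : poch (-b/2 - (n:ℂ)) k * poch ((1-b)/2 - (n:ℂ)) k * (4:ℂ)^k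
        = poch (-b - 2*(n:ℂ)) k * poch (-b - 2*(n:ℂ) + (k:ℂ)) k := by
      rw [show -b/2 - (n:ℂ) = (-b - 2*(n:ℂ))/2 by ring,
          show (1-b)/2 - (n:ℂ) = ((-b - 2*(n:ℂ)) + 1)/2 by ring,
          poch_dupl, show 2*k = k + k by ring, poch_add]
    have F2 : poch (1 - b - (n:ℂ)) n
        = poch (1 - b - (n:ℂ)) k * poch (1 - b - (n:ℂ) + (k:ℂ)) (n-k) := by
      have := poch_add (1 - b - (n:ℂ)) k (n-k)
      rw [show k + (n-k) = n by omega] at this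
      exact this
    rw [helperA hC hE (hfac k) F1 F2]
    rw [poch_reflect' (-b - 2*(n:ℂ) + (k:ℂ)) (b + 2*((n:ℂ) - k) + 1) k (by ring),
        poch_reflect' (1 - b - (n:ℂ) + (k:ℂ)) b (n-k) (by rw [Nat.cast_sub hk']; ring)]
    rw [← neg_one_pow_split n k hk']
    ring
  have h1an : poch (1+a) n ≠ 0 := by
    intro h0; apply ha2
    rw [show 2*n = n + n by ring, poch_add, h0, zero_mul]
  have hpref : (-1:ℂ)^n * poch (1 + a) (2*n) / ((n.factorial : ℂ) * poch (1 + a) n)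
      = (-1:ℂ)^n * poch (1 + a + (n:ℂ)) n / (n.factorial : ℂ) := by
    rw [show 2*n = n + n by ring, poch_add]
    rw [show (-1:ℂ)^n * (poch (1+a) n * poch (1 + a + (n:ℂ)) n)
        = ((-1:ℂ)^n * poch (1 + a + (n:ℂ)) n) * poch (1+a) n by ring,
      mul_div_mul_right _ _ h1an]
  have hR : ((-1 : ℂ) ^ n * poch (1 + a) (2 * n) / ((Nat.factorial n : ℂ) * poch (1 + a) n) *
      ∑ k ∈ range (n + 1),
        (poch (-(n : ℂ)) k * poch ((1 + a - b) / 2) k * poch ((2 + a - b) / 2) k *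
          poch 1 k) /
          ((Nat.factorial k : ℂ) * poch (1 + a - b) k * poch (1 - b - (n : ℂ)) k *
            poch (1 + a + (n : ℂ)) k) * (4 : ℂ) ^ k) * poch (1 - b - (n : ℂ)) n
      = (-1:ℂ)^n * ∑ k ∈ range (n+1),
          poch (-a - 2*(n:ℂ)) k * poch (-a - 2*(n:ℂ) + b + 2*(k:ℂ)) (n-k) * poch b k / (k.factorial : ℂ) := by
    rw [hpref, Finset.mul_sum, Finset.sum_mul]
    have hstep : ∀ k ∈ range (n+1),
        ((-1:ℂ)^n * poch (1 + a + (n:ℂ)) n / (n.factorial : ℂ)) *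
          ((poch (-(n : ℂ)) k * poch ((1 + a - b) / 2) k * poch ((2 + a - b) / 2) k *
            poch 1 k) /
            ((Nat.factorial k : ℂ) * poch (1 + a - b) k * poch (1 - b - (n : ℂ)) k *
              poch (1 + a + (n : ℂ)) k) * (4 : ℂ) ^ k) * poch (1 - b - (n : ℂ)) n
        = (-1:ℂ)^n * (poch (-a - 2*(n:ℂ)) (n-k) *
            poch (-a - 2*(n:ℂ) + b + 2*((n:ℂ) - k)) k * poch b (n-k) / (((n-k).factorial : ℕ) : ℂ)) := by
      intro k hk
      have hk' : k ≤ n := by have := Finset.mem_range.mp hk; omega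
      have hD : poch (1 + a - b) k ≠ 0 := poch_ne_zero_of_le hab hk'
      have hE : poch (1 - b - (n:ℂ)) k ≠ 0 := poch_ne_zero_of_le hb1 hk'
      have hF : poch (1 + a + (n:ℂ)) k ≠ 0 := poch_ne_zero_of_le han hk'
      have G1 : poch ((1+a-b)/2) k * poch ((2+a-b)/2) k * (4:ℂ)^k
          = poch (1 + a - b) k * poch (1 + a - b + (k:ℂ)) k := by
        rw [show (2+a-b)/2 = ((1 + a - b) + 1)/2 by ring,
            show (1+a-b)/2 = (1 + a - b)/2 by ring,
            poch_dupl, show 2*k = k + k by ring, poch_add]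
      have G2 : poch (1 - b - (n:ℂ)) n
          = poch (1 - b - (n:ℂ)) k * poch (1 - b - (n:ℂ) + (k:ℂ)) (n-k) := by
        have := poch_add (1 - b - (n:ℂ)) k (n-k)
        rw [show k + (n-k) = n by omega] at this; exact this
      have G3 : poch (1 + a + (n:ℂ)) n
          = poch (1 + a + (n:ℂ)) k * poch (1 + a + (n:ℂ) + (k:ℂ)) (n-k) := by
        have := poch_add (1 + a + (n:ℂ)) k (n-k)
        rw [show k + (n-k) = n by omega] at this; exact this
      have hmid := helperB (Pn := poch (-(n:ℂ)) k) hD hE hF (hfac k) (hfac n) n G1 G2 G3 (poch_one k)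
      rw [hmid]
      have G4 : poch (-(n:ℂ)) k * (((n-k).factorial : ℕ) : ℂ) = (-1:ℂ)^k * (n.factorial : ℂ) := by
        rw [poch_reflect' (-(n:ℂ)) (((n-k:ℕ):ℂ) + 1) k (by rw [Nat.cast_sub hk']; ring)]
        have hp := poch_nat (n-k) k
        rw [show n - k + k = n by omega] at hp
        linear_combination ((-1:ℂ))^k * hp
      rw [poch_reflect' (1 + a - b + (k:ℂ)) (-a - 2*(n:ℂ) + b + 2*((n:ℂ) - k)) k (by ring),
          poch_reflect' (1 - b - (n:ℂ) + (k:ℂ)) b (n-k) (by rw [Nat.cast_sub hk']; ring),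
          poch_reflect' (1 + a + (n:ℂ) + (k:ℂ)) (-a - 2*(n:ℂ)) (n-k) (by rw [Nat.cast_sub hk']; ring)]
      rw [← mul_div_assoc, ← mul_div_assoc, div_eq_div_iff (hfac n) (hfac (n-k))]
      set u := ((-1:ℂ))^k with hudef
      set v := ((-1:ℂ))^(n-k) with hvdef
      set w := ((-1:ℂ))^n with hwdef
      set X1 := poch (-a - 2*(n:ℂ) + b + 2*((n:ℂ) - k)) k with hX1
      set Zb := poch b (n-k) with hZb
      set Xnk := poch (-a - 2*(n:ℂ)) (n-k) with hXnk
      have hu : u * u = 1 := by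
        rw [hudef, ← pow_add]; exact Even.neg_one_pow ⟨k, rfl⟩
      have hv : v * v = 1 := by
        rw [hvdef, ← pow_add]; exact Even.neg_one_pow ⟨n-k, rfl⟩
      linear_combination (w * u * v * v * X1 * Zb * Xnk) * G4
        + (w * v * v * X1 * Zb * Xnk * (n.factorial : ℂ)) * hu
        + (w * X1 * Zb * Xnk * (n.factorial : ℂ)) * hv
    rw [Finset.sum_congr rfl hstep, ← Finset.mul_sum]
    congr 1
    rw [← Finset.sum_range_reflect
      (fun j => poch (-a - 2*(n:ℂ)) j * poch (-a - 2*(n:ℂ) + b + 2*(j:ℂ)) (n-j) * poch b j / (j.factorial : ℂ)) (n+1)]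
    refine Finset.sum_congr rfl fun k hk => ?_
    have hk' : k ≤ n := by have := Finset.mem_range.mp hk; omega
    rw [show n + 1 - 1 - k = n - k by omega]
    rw [show n - (n - k) = k by omega, Nat.cast_sub hk']
  rw [hL, hR, claimA n (-a - 2*(n:ℂ)) b]
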